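/- Let X be a measurable space, p and q probability measures on X, and F a countable family of measurable functions f : X → ℝ with sup_{f ∈ F} sup_{x ∈ X} |f(x)| ≤ ν < ∞. Let X_1, …, X_m be i.i.d. with law p and Y_1, …, Y_n be i.i.d. with law q, all mutually independent, and let p̂_m and q̂_n be the corresponding empirical measures. Then with probability at least 1 − δ, |IPM_F(p, q) − IPM_F(p̂_m, q̂_n)| ≤ 2 R_m^p(F) + 2 R_n^q(F) + √(18 ν² log(4/δ)) · (1/√m + 1/√n), where R_m^p(F) and R_n^q(F) are the Rademacher complexities of F with respect to p (with m samples) and q (with n samples). -/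

import Mathlib

open MeasureTheory

/-- Integral probability metric for a family `F` of real-valued functions. -/
noncomputable def IPM {X : Type*} [MeasurableSpace X] (F : Set (X → ℝ))
    (p q : Measure X) : ℝ :=
  sSup ((fun f => |(∫ x, f x ∂p) - ∫ x, f x ∂q|) '' F)

/-- Empirical measure of the samples `x 0, …, x (m-1)`. -/
noncomputable def empMeasure {X : Type*} [MeasurableSpace X] {m : ℕ}
    (x : Fin m → X) : Measure X :=
  (m : ENNReal)⁻¹ • ∑ i : Fin m, Measure.dirac (x i)

/-- Rademacher complexity of `F` with respect to `μ` and `m` samples: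
the Rademacher signs are encoded by i.i.d. uniform Booleans. -/
noncomputable def rademacher {X : Type*} [MeasurableSpace X] (μ : Measure X)
    (m : ℕ) (F : Set (X → ℝ)) : ℝ :=
  ∫ ω : (Fin m → X) × (Fin m → Bool),
    sSup ((fun f =>
      |(m : ℝ)⁻¹ * ∑ i : Fin m, (if ω.2 i then (1 : ℝ) else -1) * f (ω.1 i)|) '' F)
    ∂((Measure.pi fun _ => μ).prod
        (Measure.pi fun _ => (PMF.uniformOfFintype Bool).toMeasure))


set_option maxHeartbeats 2000000



section Helpers

variable {X : Type*} [MeasurableSpace X]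

lemma integrable_of_bdd {μ : Measure X} [IsFiniteMeasure μ] {g : X → ℝ}
    (hm : Measurable g) {B : ℝ} (hb : ∀ x, |g x| ≤ B) : Integrable g μ :=
  (integrable_const B).mono' hm.aestronglyMeasurable
    (Filter.Eventually.of_forall fun x => by simpa using hb x)

lemma hoeffding_lite (μ : Measure X) [IsProbabilityMeasure μ] {Y : X → ℝ}
    (hY : Measurable Y) {c : ℝ} (hc : 0 ≤ c) (hbd : ∀ x, |Y x| ≤ c)
    (hmean : ∫ x, Y x ∂μ = 0) (t : ℝ) :
    ∫ x, Real.exp (t * Y x) ∂μ ≤ Real.exp (t ^ 2 * c ^ 2 / 2) := by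
  rcases eq_or_lt_of_le hc with rfl | hc
  · have hY0 : ∀ x, Y x = 0 := fun x => abs_nonpos_iff.mp (hbd x)
    simp [hY0]
  -- pointwise chord bound
  have key : ∀ x, Real.exp (t * Y x) ≤
      ((c - Y x) / (2 * c)) * Real.exp (-(t * c)) +
        ((c + Y x) / (2 * c)) * Real.exp (t * c) := by
    intro x
    have h1 : (0:ℝ) ≤ (c - Y x) / (2 * c) := by
      apply div_nonneg _ (by linarith)
      have := (abs_le.mp (hbd x)).2; linarith
    have h2 : (0:ℝ) ≤ (c + Y x) / (2 * c) := by
      apply div_nonneg _ (by linarith)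
      have := (abs_le.mp (hbd x)).1; linarith
    have h3 : (c - Y x) / (2 * c) + (c + Y x) / (2 * c) = 1 := by
      field_simp; ring
    have := convexOn_exp.2 (Set.mem_univ (-(t*c))) (Set.mem_univ (t*c)) h1 h2 h3
    simp only [smul_eq_mul] at this
    have harg : (c - Y x) / (2 * c) * -(t * c) + (c + Y x) / (2 * c) * (t * c) = t * Y x := by
      field_simp; ring
    rw [harg] at this
    exact this
  have hint1 : Integrable (fun x => Real.exp (t * Y x)) μ := by
    apply integrable_of_bdd (by fun_prop)
    intro x
    rw [abs_of_pos (Real.exp_pos _)]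
    apply Real.exp_le_exp.mpr
    calc t * Y x ≤ |t * Y x| := le_abs_self _
      _ = |t| * |Y x| := abs_mul _ _
      _ ≤ |t| * c := by gcongr; exact hbd x
  have hint2 : Integrable (fun x => ((c - Y x) / (2 * c)) * Real.exp (-(t * c)) +
      ((c + Y x) / (2 * c)) * Real.exp (t * c)) μ := by
    apply Integrable.add <;>
    · apply Integrable.mul_const
      apply Integrable.div_const
      first
      | exact (integrable_const c).sub (integrable_of_bdd hY hbd)
      | exact (integrable_const c).add (integrable_of_bdd hY hbd)
  calc ∫ x, Real.exp (t * Y x) ∂μ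
      ≤ ∫ x, (((c - Y x) / (2 * c)) * Real.exp (-(t * c)) +
          ((c + Y x) / (2 * c)) * Real.exp (t * c)) ∂μ :=
        integral_mono hint1 hint2 key
    _ = Real.cosh (t * c) := by
        rw [integral_add, integral_mul_const, integral_mul_const]
        · have hYint : Integrable Y μ := integrable_of_bdd hY hbd
          rw [integral_div, integral_div, integral_sub (integrable_const c) hYint,
            integral_add (integrable_const c) hYint, hmean, integral_const]
          simp only [probReal_univ, smul_eq_mul, one_mul, sub_zero, add_zero]
          rw [Real.cosh_eq]
          field_simp
          ring
        · exact (((integrable_const c).sub (integrable_of_bdd hY hbd)).div_const _).mul_const _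
        · exact (((integrable_const c).add (integrable_of_bdd hY hbd)).div_const _).mul_const _
    _ ≤ Real.exp ((t * c) ^ 2 / 2) := Real.cosh_le_exp_half_sq _
    _ = Real.exp (t ^ 2 * c ^ 2 / 2) := by ring_nf

end Helpers


section SupHelpers

lemma bddAbove_abs_range {u : ℕ → ℝ} {b : ℝ} (h : ∀ k, |u k| ≤ b) :
    BddAbove (Set.range fun k => |u k|) := by
  refine ⟨b, ?_⟩
  rintro - ⟨k, rfl⟩
  exact h k

lemma ciSup_abs_le {u : ℕ → ℝ} {b : ℝ} (h : ∀ k, |u k| ≤ b) : (⨆ k, |u k|) ≤ b :=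
  ciSup_le fun k => h k

lemma ciSup_abs_nonneg {u : ℕ → ℝ} {b : ℝ} (h : ∀ k, |u k| ≤ b) : 0 ≤ ⨆ k, |u k| :=
  le_trans (abs_nonneg (u 0)) (le_ciSup (bddAbove_abs_range h) 0)

lemma ciSup_abs_le_add {u w : ℕ → ℝ} {b c : ℝ} (hw : ∀ k, |w k| ≤ b)
    (h : ∀ k, |u k| ≤ |w k| + c) : (⨆ k, |u k|) ≤ (⨆ k, |w k|) + c :=
  ciSup_le fun k => le_trans (h k) (by gcongr; exact le_ciSup (bddAbove_abs_range hw) k)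

lemma abs_ciSup_sub {u w : ℕ → ℝ} {b c : ℝ} (hu : ∀ k, |u k| ≤ b) (hw : ∀ k, |w k| ≤ b)
    (h : ∀ k, |u k - w k| ≤ c) : |(⨆ k, |u k|) - (⨆ k, |w k|)| ≤ c := by
  rw [abs_sub_le_iff]
  constructor
  · rw [sub_le_iff_le_add, add_comm]
    exact ciSup_abs_le_add hw fun k => by
      have := abs_sub_abs_le_abs_sub (u k) (w k); have := h k; linarith
  · rw [sub_le_iff_le_add, add_comm]
    exact ciSup_abs_le_add hu fun k => by
      have := abs_sub_abs_le_abs_sub (w k) (u k)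
      have h2 : |w k - u k| ≤ c := by rw [abs_sub_comm]; exact h k
      linarith

lemma sSup_image_range {α : Type*} (g : (α → ℝ) → ℝ) (e : ℕ → α → ℝ) :
    sSup (g '' Set.range e) = ⨆ k, g (e k) := by
  rw [← Set.range_comp]; rfl

end SupHelpers

section EvalPi

variable {X : Type*} [MeasurableSpace X]

lemma measurePreserving_eval_pi (μ : Measure X) [IsProbabilityMeasure μ] {m : ℕ} (i : Fin m) :
    MeasurePreserving (Function.eval i) (Measure.pi fun _ : Fin m => μ) μ := by
  refine ⟨measurable_pi_apply i, ?_⟩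
  ext s hs
  rw [Measure.map_apply (measurable_pi_apply i) hs, Set.eval_preimage, Measure.pi_pi]
  rw [Fintype.prod_eq_single i (fun j hj => by simp [Function.update_of_ne hj])]
  simp

lemma integral_eval_pi (μ : Measure X) [IsProbabilityMeasure μ] {m : ℕ} (i : Fin m)
    (f : X → ℝ) (hf : Measurable f) :
    ∫ x : Fin m → X, f (x i) ∂(Measure.pi fun _ : Fin m => μ) = ∫ y, f y ∂μ := by
  conv_rhs => rw [← (measurePreserving_eval_pi μ i).map_eq]
  rw [integral_map (measurable_pi_apply i).aemeasurable hf.aestronglyMeasurable]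

end EvalPi
section MGF

variable {X : Type*} [MeasurableSpace X]

lemma measurable_fin_cons {m : ℕ} :
    Measurable fun z : X × (Fin m → X) => (Fin.cons z.1 z.2 : Fin (m + 1) → X) := by
  apply measurable_pi_iff.mpr
  intro j
  refine Fin.cases ?_ (fun i => ?_) j
  · simpa only [Fin.cons_zero] using measurable_fst
  · simp only [Fin.cons_succ]; exact (measurable_pi_apply i).comp measurable_snd

lemma abs_integral_le' {μ : Measure X} (g : X → ℝ) :
    |∫ x, g x ∂μ| ≤ ∫ x, |g x| ∂μ := by
  simpa [Real.norm_eq_abs] using norm_integral_le_integral_norm (μ := μ) g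

omit [MeasurableSpace X] in
lemma exp_bdd_of_bdd {g : X → ℝ} {B : ℝ} (hb : ∀ x, |g x| ≤ B) (t : ℝ) :
    ∀ x, |Real.exp (t * g x)| ≤ Real.exp (|t| * B) := by
  intro x
  rw [abs_of_pos (Real.exp_pos _)]
  apply Real.exp_le_exp.mpr
  calc t * g x ≤ |t * g x| := le_abs_self _
    _ = |t| * |g x| := abs_mul _ _
    _ ≤ |t| * B := by
        apply mul_le_mul_of_nonneg_left (hb x) (abs_nonneg t)

lemma mgf_pi_bound (μ : Measure X) [IsProbabilityMeasure μ] :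
    ∀ (m : ℕ) (H : (Fin m → X) → ℝ), Measurable H → ∀ B : ℝ, (∀ x, |H x| ≤ B) →
    ∀ c : ℝ, 0 ≤ c → (∀ x i v, |H (Function.update x i v) - H x| ≤ c) → ∀ t : ℝ,
    ∫ x, Real.exp (t * (H x - ∫ y, H y ∂(Measure.pi fun _ : Fin m => μ)))
      ∂(Measure.pi fun _ : Fin m => μ) ≤ Real.exp (m * (t ^ 2 * c ^ 2 / 2)) := by
  intro m
  induction m with
  | zero =>
    intro H hH B hB c hc hdiff t
    have hconst : ∀ x : Fin 0 → X, H x = H default := fun x => by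
      rw [Subsingleton.elim x default]
    simp_rw [hconst]
    rw [integral_const, integral_const]
    simp
  | succ m ih =>
    intro H hH B hB c hc hdiff t
    set ν : Measure (Fin m → X) := Measure.pi fun _ : Fin m => μ with hν
    set PP : Measure (Fin (m + 1) → X) := Measure.pi fun _ : Fin (m + 1) => μ with hPP
    have hKmeas : Measurable fun z : X × (Fin m → X) => H (Fin.cons z.1 z.2) :=
      hH.comp measurable_fin_cons
    -- transfer integrals to the product space
    have transfer : ∀ g : (Fin (m + 1) → X) → ℝ, Measurable g →
        ∫ x, g x ∂PP = ∫ z : X × (Fin m → X), g (Fin.cons z.1 z.2) ∂(μ.prod ν) := by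
      intro g hg
      have hmp := measurePreserving_piFinSuccAbove (fun _ : Fin (m + 1) => μ) 0
      have hmps := hmp.symm (MeasurableEquiv.piFinSuccAbove (fun _ => X) 0)
      rw [← hmps.integral_comp' g]
      apply integral_congr_ae
      filter_upwards with z
      congr 1
      simp only [MeasurableEquiv.piFinSuccAbove_symm_apply]
      exact Fin.insertNth_zero' z.1 z.2
    -- the conditioned function
    set H1 : (Fin m → X) → ℝ := fun z => ∫ x, H (Fin.cons x z) ∂μ with hH1
    have hH1meas : Measurable H1 :=
      (StronglyMeasurable.integral_prod_left' (hKmeas.stronglyMeasurable)).measurable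
    have hconsMeas : ∀ z : Fin m → X, Measurable fun x => H (Fin.cons x z) := by
      intro z
      exact (hH.comp measurable_fin_cons).comp measurable_prodMk_right
    have hconsInt : ∀ z : Fin m → X,
        Integrable (fun x => H (Fin.cons x z)) μ := fun z =>
      integrable_of_bdd (hconsMeas z) (fun x => hB _)
    have hH1bd : ∀ z, |H1 z| ≤ B := by
      intro z
      calc |H1 z| ≤ ∫ x, |H (Fin.cons x z)| ∂μ := abs_integral_le' _
        _ ≤ ∫ _ : X, B ∂μ :=
            integral_mono (hconsInt z).abs (integrable_const B) (fun x => hB _)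
        _ = B := by simp
    have hH1diff : ∀ z i v, |H1 (Function.update z i v) - H1 z| ≤ c := by
      intro z i v
      rw [hH1]
      simp only
      rw [← integral_sub (hconsInt _) (hconsInt _)]
      calc |∫ x, (H (Fin.cons x (Function.update z i v)) - H (Fin.cons x z)) ∂μ|
          ≤ ∫ x, |H (Fin.cons x (Function.update z i v)) - H (Fin.cons x z)| ∂μ :=
            abs_integral_le' _
        _ ≤ ∫ _ : X, c ∂μ := by
            apply integral_mono _ (integrable_const c) _
            · exact ((hconsInt _).sub (hconsInt _)).abs
            · intro x
              have h0 := hdiff (Fin.cons x z) i.succ v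
              rwa [← Fin.cons_update] at h0
        _ = c := by simp
    have hEH : ∫ y, H y ∂PP = ∫ z, H1 z ∂ν := by
      rw [transfer H hH]
      exact integral_prod_symm (fun z : X × (Fin m → X) => H (Fin.cons z.1 z.2))
        (integrable_of_bdd hKmeas (fun z => hB _))
    set E : ℝ := ∫ y, H y ∂PP with hE
    -- inner bound for fixed z
    have inner : ∀ z : Fin m → X,
        ∫ x, Real.exp (t * (H (Fin.cons x z) - E)) ∂μ ≤
          Real.exp (t ^ 2 * c ^ 2 / 2) * Real.exp (t * (H1 z - E)) := by
      intro z
      have hsplit : ∀ x, Real.exp (t * (H (Fin.cons x z) - E)) =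
          Real.exp (t * (H (Fin.cons x z) - H1 z)) * Real.exp (t * (H1 z - E)) := by
        intro x
        rw [← Real.exp_add]
        ring_nf
      simp_rw [hsplit]
      rw [integral_mul_const]
      apply mul_le_mul_of_nonneg_right _ (Real.exp_pos _).le
      -- Hoeffding on Y x := H (cons x z) - H1 z
      apply hoeffding_lite μ _ hc _ _ t
      · exact (hconsMeas z).sub measurable_const
      · intro x
        have : H (Fin.cons x z) - H1 z =
            ∫ x', (H (Fin.cons x z) - H (Fin.cons x' z)) ∂μ := by
          rw [integral_sub (integrable_const _) (hconsInt z), integral_const]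
          simp [hH1]
        rw [this]
        calc |∫ x', (H (Fin.cons x z) - H (Fin.cons x' z)) ∂μ|
            ≤ ∫ x', |H (Fin.cons x z) - H (Fin.cons x' z)| ∂μ := abs_integral_le' _
          _ ≤ ∫ _ : X, c ∂μ := by
              apply integral_mono _ (integrable_const c) _
              · exact ((integrable_const _).sub (hconsInt z)).abs
              · intro x'
                have h0 := hdiff (Fin.cons x' z) 0 x
                rwa [Fin.update_cons_zero] at h0
          _ = c := by simp
      · rw [integral_sub (hconsInt z) (integrable_const _), integral_const]
        simp [hH1]
    -- main chain
    have hBE : ∀ x, |H x - E| ≤ B + |E| := fun x =>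
      calc |H x - E| ≤ |H x| + |E| := abs_sub _ _
        _ ≤ B + |E| := by linarith [hB x]
    have hint_main : Integrable (fun z : X × (Fin m → X) =>
        Real.exp (t * (H (Fin.cons z.1 z.2) - E))) (μ.prod ν) :=
      integrable_of_bdd (Real.measurable_exp.comp
        (measurable_const.mul (hKmeas.sub measurable_const)))
        (fun z => exp_bdd_of_bdd hBE t _)
    calc ∫ x, Real.exp (t * (H x - E)) ∂PP
        = ∫ z : X × (Fin m → X), Real.exp (t * (H (Fin.cons z.1 z.2) - E)) ∂(μ.prod ν) :=
          transfer _ (Real.measurable_exp.comp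
            (measurable_const.mul (hH.sub measurable_const)))
      _ = ∫ z2, (∫ x, Real.exp (t * (H (Fin.cons x z2) - E)) ∂μ) ∂ν :=
          integral_prod_symm _ hint_main
      _ ≤ ∫ z2, Real.exp (t ^ 2 * c ^ 2 / 2) * Real.exp (t * (H1 z2 - E)) ∂ν := by
          apply integral_mono _ _ inner
          · exact hint_main.integral_prod_right
          · apply Integrable.const_mul
            apply integrable_of_bdd (Real.measurable_exp.comp
              (measurable_const.mul (hH1meas.sub measurable_const)))
            exact exp_bdd_of_bdd (fun z => by
              have := hH1bd z
              calc |H1 z - E| ≤ |H1 z| + |E| := abs_sub _ _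
                _ ≤ B + |E| := by linarith) t
      _ = Real.exp (t ^ 2 * c ^ 2 / 2) * ∫ z2, Real.exp (t * (H1 z2 - ∫ z, H1 z ∂ν)) ∂ν := by
          rw [integral_const_mul, hEH]
      _ ≤ Real.exp (t ^ 2 * c ^ 2 / 2) * Real.exp (m * (t ^ 2 * c ^ 2 / 2)) := by
          apply mul_le_mul_of_nonneg_left _ (Real.exp_pos _).le
          exact ih H1 hH1meas B hH1bd c hc hH1diff t
      _ = Real.exp ((m + 1 : ℕ) * (t ^ 2 * c ^ 2 / 2)) := by
          rw [← Real.exp_add]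
          push_cast
          ring_nf

end MGF
section S4
variable {X : Type*} [MeasurableSpace X]

lemma mcdiarmid_tail (μ : Measure X) [IsProbabilityMeasure μ] {m : ℕ} (hm : 0 < m)
    (H : (Fin m → X) → ℝ) (hH : Measurable H) (B : ℝ) (hB : ∀ x, |H x| ≤ B)
    {c : ℝ} (hc : 0 < c) (hdiff : ∀ x i v, |H (Function.update x i v) - H x| ≤ c)
    {ε : ℝ} (hε : 0 < ε) :
    (Measure.pi fun _ : Fin m => μ) {x | (∫ y, H y ∂(Measure.pi fun _ : Fin m => μ)) + ε ≤ H x}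
      ≤ ENNReal.ofReal (Real.exp (-(ε ^ 2) / (2 * m * c ^ 2))) := by
  set P : Measure (Fin m → X) := Measure.pi fun _ : Fin m => μ with hP
  set E : ℝ := ∫ y, H y ∂P with hE
  set t : ℝ := ε / (m * c ^ 2) with htdef
  have hm0 : (m : ℝ) ≠ 0 := Nat.cast_ne_zero.mpr hm.ne'
  have hmpos : (0:ℝ) < m := Nat.cast_pos.mpr hm
  have ht : 0 ≤ t := le_of_lt (div_pos hε (by positivity))
  have hmeasX : Measurable fun x => H x - E := hH.sub measurable_const
  have hbd : ∀ x, |H x - E| ≤ B + |E| := fun x =>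
    le_trans (abs_sub (H x) E) (by linarith [hB x])
  have hint : Integrable (fun x => Real.exp (t * (H x - E))) P :=
    integrable_of_bdd (Real.measurable_exp.comp (measurable_const.mul hmeasX))
      (exp_bdd_of_bdd hbd t)
  have hset : {x | E + ε ≤ H x} = {ω | ε ≤ H ω - E} := by
    ext x; simp [le_sub_iff_add_le']
  have hch := ProbabilityTheory.measure_ge_le_exp_mul_mgf (X := fun x => H x - E) (μ := P)
    ε ht hint
  rw [hset]
  rw [ENNReal.le_ofReal_iff_toReal_le (measure_ne_top _ _) (Real.exp_pos _).le]
  refine le_trans hch ?_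
  have hmgf : ProbabilityTheory.mgf (fun x => H x - E) P t ≤
      Real.exp (m * (t ^ 2 * c ^ 2 / 2)) := by
    have := mgf_pi_bound μ m H hH B hB c hc.le hdiff t
    rw [ProbabilityTheory.mgf]
    simpa [hP, hE] using this
  calc Real.exp (-t * ε) * ProbabilityTheory.mgf (fun x => H x - E) P t
      ≤ Real.exp (-t * ε) * Real.exp (m * (t ^ 2 * c ^ 2 / 2)) := by
        apply mul_le_mul_of_nonneg_left hmgf (Real.exp_pos _).le
    _ = Real.exp (-t * ε + m * (t ^ 2 * c ^ 2 / 2)) := (Real.exp_add _ _).symm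
    _ = Real.exp (-(ε ^ 2) / (2 * m * c ^ 2)) := by
        congr 1
        rw [htdef]
        field_simp
        ring

end S4


section S5
variable {X : Type*} [MeasurableSpace X]



lemma avg_abs_le {m : ℕ} (hm : 0 < m) {g : Fin m → ℝ} {b : ℝ} (h : ∀ i, |g i| ≤ b) :
    |(m : ℝ)⁻¹ * ∑ i, g i| ≤ b := by
  have hm0 : (0:ℝ) < m := Nat.cast_pos.mpr hm
  rw [abs_mul, abs_inv, Nat.abs_cast]
  rw [inv_mul_le_iff₀ hm0]
  calc |∑ i, g i| ≤ ∑ i, |g i| := Finset.abs_sum_le_sum_abs _ _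
    _ ≤ ∑ _i : Fin m, b := Finset.sum_le_sum (fun i _ => h i)
    _ = m * b := by simp [mul_comm]

lemma integral_avg_pi (μ : Measure X) [IsProbabilityMeasure μ] {m : ℕ}
    (f : X → ℝ) (hf : Measurable f) {b : ℝ} (hbd : ∀ x, |f x| ≤ b) :
    ∫ x : Fin m → X, ((m : ℝ)⁻¹ * ∑ i, f (x i)) ∂(Measure.pi fun _ : Fin m => μ)
      = (m : ℝ)⁻¹ * (m * ∫ y, f y ∂μ) := by
  rw [integral_const_mul]
  congr 1
  rw [integral_finset_sum Finset.univ (f := fun (i : Fin m) (x : Fin m → X) => f (x i))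
    (fun i _ => integrable_of_bdd (hf.comp (measurable_pi_apply i)) (fun x => hbd _))]
  rw [Finset.sum_congr rfl (fun i _ => integral_eval_pi μ i f hf)]
  simp [mul_comm]

lemma nonempty_of_prob (μ : Measure X) [IsProbabilityMeasure μ] : Nonempty X := by
  by_contra h
  rw [not_nonempty_iff] at h
  have h0 : μ = 0 := μ.eq_zero_of_isEmpty
  have h1 := measure_univ (μ := μ)
  rw [h0] at h1
  simp at h1

end S5

section S6
variable {X : Type*} [MeasurableSpace X]



lemma abs_ciSup_abs_le {u : ℕ → ℝ} {b : ℝ} (h : ∀ k, |u k| ≤ b) : |(⨆ k, |u k|)| ≤ b := by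
  rw [abs_of_nonneg (ciSup_abs_nonneg h)]; exact ciSup_abs_le h

/-- Rademacher-type integrand. -/
noncomputable def Ufun (e : ℕ → X → ℝ) (m : ℕ) (z : (Fin m → X) × (Fin m → Bool)) : ℝ :=
  ⨆ k, |(m : ℝ)⁻¹ * ∑ i, (if z.2 i then (1 : ℝ) else -1) * e k (z.1 i)|

/-- Ghost-sample difference integrand. -/
noncomputable def Wfun (e : ℕ → X → ℝ) (m : ℕ) (pr : (Fin m → X) × (Fin m → X)) : ℝ :=
  ⨆ k, |(m : ℝ)⁻¹ * ∑ i, (e k (pr.1 i) - e k (pr.2 i))|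

/-- Signed ghost-sample difference integrand. -/
noncomputable def Gfun (e : ℕ → X → ℝ) (m : ℕ) (ρ : Fin m → Bool) (ω : Fin m → X × X) : ℝ :=
  ⨆ k, |(m : ℝ)⁻¹ * ∑ i, (if ρ i then (1 : ℝ) else -1) * (e k (ω i).1 - e k (ω i).2)|

lemma symmetrization (μ : Measure X) [IsProbabilityMeasure μ] {m : ℕ} (hm : 0 < m)
    (e : ℕ → X → ℝ) (he : ∀ k, Measurable (e k)) {b : ℝ} (hb : ∀ k x, |e k x| ≤ b) :
    ∫ x : Fin m → X, (⨆ k, |(∫ y, e k y ∂μ) - (m : ℝ)⁻¹ * ∑ i : Fin m, e k (x i)|)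
        ∂(Measure.pi fun _ : Fin m => μ) ≤
      2 * ∫ ω : (Fin m → X) × (Fin m → Bool),
        (⨆ k, |(m : ℝ)⁻¹ * ∑ i : Fin m, (if ω.2 i then (1 : ℝ) else -1) * e k (ω.1 i)|)
        ∂((Measure.pi fun _ : Fin m => μ).prod
            (Measure.pi fun _ : Fin m => (PMF.uniformOfFintype Bool).toMeasure)) := by
  set P : Measure (Fin m → X) := Measure.pi fun _ : Fin m => μ with hP
  set Bm : Measure (Fin m → Bool) :=
    Measure.pi fun _ : Fin m => (PMF.uniformOfFintype Bool).toMeasure with hBm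
  set P2 : Measure (Fin m → X × X) := Measure.pi fun _ : Fin m => μ.prod μ with hP2
  -- basic bounds
  have hIabs : ∀ k, ∫ y, |e k y| ∂μ ≤ b := by
    intro k
    calc ∫ y, |e k y| ∂μ ≤ ∫ _ : X, b ∂μ :=
          integral_mono (integrable_of_bdd (he k) (hb k)).abs (integrable_const _) (hb k)
      _ = b := by simp
  have hIb : ∀ k, |∫ y, e k y ∂μ| ≤ b := fun k => (abs_integral_le' _).trans (hIabs k)
  have hsgn_abs : ∀ s : Bool, |(if s then (1 : ℝ) else -1)| = 1 := by
    intro s; cases s <;> norm_num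
  have hZb : ∀ (x : Fin m → X) k,
      |(∫ y, e k y ∂μ) - (m : ℝ)⁻¹ * ∑ i, e k (x i)| ≤ b + b := by
    intro x k
    refine (abs_sub _ _).trans ?_
    have h2 := avg_abs_le hm (g := fun i => e k (x i)) (fun i => hb k _)
    have := hIb k
    linarith
  have hWb : ∀ (pr : (Fin m → X) × (Fin m → X)) k,
      |(m : ℝ)⁻¹ * ∑ i, (e k (pr.1 i) - e k (pr.2 i))| ≤ b + b := by
    intro pr k
    refine avg_abs_le hm (fun i => ?_)
    refine (abs_sub _ _).trans ?_
    have := hb k (pr.1 i); have := hb k (pr.2 i); linarith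
  have hGb : ∀ (ρ : Fin m → Bool) (ω : Fin m → X × X) k,
      |(m : ℝ)⁻¹ * ∑ i, (if ρ i then (1 : ℝ) else -1) * (e k (ω i).1 - e k (ω i).2)| ≤ b + b := by
    intro ρ ω k
    refine avg_abs_le hm (fun i => ?_)
    rw [abs_mul, hsgn_abs, one_mul]
    refine (abs_sub _ _).trans ?_
    have := hb k (ω i).1; have := hb k (ω i).2; linarith
  have hUb : ∀ (z : (Fin m → X) × (Fin m → Bool)) k,
      |(m : ℝ)⁻¹ * ∑ i, (if z.2 i then (1 : ℝ) else -1) * e k (z.1 i)| ≤ b := by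
    intro z k
    refine avg_abs_le hm (fun i => ?_)
    rw [abs_mul, hsgn_abs, one_mul]
    exact hb k _
  -- measurability
  have hZmeas : Measurable fun x : Fin m → X =>
      ⨆ k, |(∫ y, e k y ∂μ) - (m : ℝ)⁻¹ * ∑ i, e k (x i)| := by
    refine Measurable.iSup fun k => Measurable.abs ?_
    exact measurable_const.sub (measurable_const.mul
      (Finset.measurable_sum _ fun i _ => (he k).comp (measurable_pi_apply i)))
  have hWmeas : Measurable (Wfun e m) := by
    refine Measurable.iSup fun k => Measurable.abs ?_
    exact measurable_const.mul (Finset.measurable_sum _ fun i _ =>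
      ((he k).comp ((measurable_pi_apply i).comp measurable_fst)).sub
      ((he k).comp ((measurable_pi_apply i).comp measurable_snd)))
  have hUmeas : Measurable (Ufun e m) := by
    refine Measurable.iSup fun k => Measurable.abs ?_
    refine measurable_const.mul (Finset.measurable_sum _ fun i _ => Measurable.mul ?_ ?_)
    · exact (measurable_from_top (f := fun s : Bool => if s then (1:ℝ) else -1)).comp
        ((measurable_pi_apply i).comp measurable_snd)
    · exact (he k).comp ((measurable_pi_apply i).comp measurable_fst)
  have hGmeas : ∀ ρ : Fin m → Bool, Measurable (Gfun e m ρ) := by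
    intro ρ
    refine Measurable.iSup fun k => Measurable.abs ?_
    exact measurable_const.mul (Finset.measurable_sum _ fun i _ => measurable_const.mul
      (((he k).comp (measurable_fst.comp (measurable_pi_apply i))).sub
       ((he k).comp (measurable_snd.comp (measurable_pi_apply i)))))
  -- integrability
  have hintW : Integrable (Wfun e m) (P.prod P) :=
    integrable_of_bdd hWmeas fun pr => abs_ciSup_abs_le (hWb pr)
  have hintU : Integrable (Ufun e m) (P.prod Bm) :=
    integrable_of_bdd hUmeas fun z => abs_ciSup_abs_le (hUb z)
  have hintG : ∀ ρ, Integrable (Gfun e m ρ) P2 := fun ρ =>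
    integrable_of_bdd (hGmeas ρ) fun ω => abs_ciSup_abs_le (hGb ρ ω)
  -- Step A: ghost sample, Jensen
  have stepA : ∀ x : Fin m → X,
      (⨆ k, |(∫ y, e k y ∂μ) - (m : ℝ)⁻¹ * ∑ i, e k (x i)|) ≤
        ∫ x', Wfun e m (x', x) ∂P := by
    intro x
    refine ciSup_le fun k => ?_
    have hm0 : (m : ℝ) ≠ 0 := Nat.cast_ne_zero.mpr hm.ne'
    have hval : (∫ y, e k y ∂μ) - (m : ℝ)⁻¹ * ∑ i, e k (x i) =
        ∫ x' : Fin m → X, ((m : ℝ)⁻¹ * ∑ i, (e k (x' i) - e k (x i))) ∂P := by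
      have h1 : ∀ x' : Fin m → X, (m : ℝ)⁻¹ * ∑ i, (e k (x' i) - e k (x i)) =
          ((m : ℝ)⁻¹ * ∑ i, e k (x' i)) - ((m : ℝ)⁻¹ * ∑ i, e k (x i)) := by
        intro x'; rw [Finset.sum_sub_distrib, mul_sub]
      rw [integral_congr_ae (Filter.Eventually.of_forall h1)]
      rw [integral_sub (by
        exact integrable_of_bdd (measurable_const.mul
          (Finset.measurable_sum _ fun i _ => (he k).comp (measurable_pi_apply i)))
          (fun x' => avg_abs_le hm (fun i => hb k _)))
        (integrable_const _)]
      rw [integral_const, probReal_univ, one_smul]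
      rw [integral_avg_pi μ (e k) (he k) (hb k)]
      field_simp
    rw [hval]
    refine (abs_integral_le' _).trans ?_
    refine integral_mono ?_ ?_ ?_
    · refine Integrable.abs ?_
      exact integrable_of_bdd (measurable_const.mul
        (Finset.measurable_sum _ fun i _ => ((he k).comp (measurable_pi_apply i)).sub
          measurable_const))
        (fun x' => hWb (x', x) k)
    · exact integrable_of_bdd (hWmeas.comp measurable_prodMk_right)
        (fun x' => abs_ciSup_abs_le (hWb (x', x)))
    · intro x'
      exact le_ciSup (bddAbove_abs_range (fun k' => hWb (x', x) k')) k
  -- the equivalence with the doubled sample space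
  have hΦ := measurePreserving_arrowProdEquivProdArrow X X (Fin m)
    (fun _ : Fin m => μ) (fun _ : Fin m => μ)
  -- sign invariance
  have stepD : ∀ ρ : Fin m → Bool, ∫ ω, Gfun e m ρ ω ∂P2 = ∫ ω, Gfun e m (fun _ => true) ω ∂P2 := by
    intro ρ
    have hT : MeasurePreserving
        (fun ω : Fin m → X × X => fun i => if ρ i then ω i else Prod.swap (ω i)) P2 P2 := by
      refine measurePreserving_pi (fun _ : Fin m => μ.prod μ) (fun _ : Fin m => μ.prod μ)
        (f := fun i (y : X × X) => if ρ i then y else Prod.swap y) (fun i => ?_)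
      by_cases h : ρ i = true
      · simp only [h, if_true]
        exact MeasurePreserving.id _
      · simp only [h, if_false]
        exact Measure.measurePreserving_swap
    have hGT : ∀ ω, Gfun e m ρ ω =
        Gfun e m (fun _ => true) (fun i => if ρ i then ω i else Prod.swap (ω i)) := by
      intro ω
      refine iSup_congr fun k => ?_
      congr 1
      congr 1
      refine Finset.sum_congr rfl fun i _ => ?_
      by_cases h : ρ i = true <;> simp [h] <;> ring
    calc ∫ ω, Gfun e m ρ ω ∂P2
        = ∫ ω, Gfun e m (fun _ => true) (fun i => if ρ i then ω i else Prod.swap (ω i)) ∂P2 :=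
          integral_congr_ae (Filter.Eventually.of_forall hGT)
      _ = ∫ ω, Gfun e m (fun _ => true) ω ∂P2 := by
          conv_rhs => rw [← hT.map_eq]
          rw [integral_map hT.measurable.aemeasurable
            (hGmeas (fun _ => true)).aestronglyMeasurable]
  -- projections
  have hmpfst : MeasurePreserving (fun ω : Fin m → X × X => fun i => (ω i).1) P2 P :=
    measurePreserving_pi (fun _ : Fin m => μ.prod μ) (fun _ : Fin m => μ)
      (f := fun _ (y : X × X) => y.1)
      (fun i => ⟨measurable_fst, by rw [Measure.map_fst_prod]; simp⟩)
  have hmpsnd : MeasurePreserving (fun ω : Fin m → X × X => fun i => (ω i).2) P2 P :=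
    measurePreserving_pi (fun _ : Fin m => μ.prod μ) (fun _ : Fin m => μ)
      (f := fun _ (y : X × X) => y.2)
      (fun i => ⟨measurable_snd, by rw [Measure.map_snd_prod]; simp⟩)
  have hfst : ∀ ρ : Fin m → Bool,
      ∫ ω, Ufun e m (fun i => (ω i).1, ρ) ∂P2 = ∫ x, Ufun e m (x, ρ) ∂P := by
    intro ρ
    conv_rhs => rw [← hmpfst.map_eq]
    rw [integral_map hmpfst.measurable.aemeasurable
      ((show Measurable fun x : Fin m → X => Ufun e m (x, ρ) from
        hUmeas.comp measurable_prodMk_right).aestronglyMeasurable)]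
  have hsnd : ∀ ρ : Fin m → Bool,
      ∫ ω, Ufun e m (fun i => (ω i).2, ρ) ∂P2 = ∫ x, Ufun e m (x, ρ) ∂P := by
    intro ρ
    conv_rhs => rw [← hmpsnd.map_eq]
    rw [integral_map hmpsnd.measurable.aemeasurable
      ((show Measurable fun x : Fin m → X => Ufun e m (x, ρ) from
        hUmeas.comp measurable_prodMk_right).aestronglyMeasurable)]
  -- split bound for fixed ρ
  have hρbound : ∀ ρ : Fin m → Bool,
      ∫ ω, Gfun e m (fun _ => true) ω ∂P2 ≤ 2 * ∫ x, Ufun e m (x, ρ) ∂P := by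
    intro ρ
    rw [← stepD ρ]
    have hintU1 : Integrable (fun ω : Fin m → X × X => Ufun e m (fun i => (ω i).1, ρ)) P2 :=
      integrable_of_bdd ((hUmeas.comp measurable_prodMk_right).comp hmpfst.measurable)
        (fun ω => abs_ciSup_abs_le (hUb _))
    have hintU2 : Integrable (fun ω : Fin m → X × X => Ufun e m (fun i => (ω i).2, ρ)) P2 :=
      integrable_of_bdd ((hUmeas.comp measurable_prodMk_right).comp hmpsnd.measurable)
        (fun ω => abs_ciSup_abs_le (hUb _))
    have hsplit : ∀ ω, Gfun e m ρ ω ≤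
        Ufun e m (fun i => (ω i).1, ρ) + Ufun e m (fun i => (ω i).2, ρ) := by
      intro ω
      refine ciSup_le fun k => ?_
      have hdec : (m : ℝ)⁻¹ * ∑ i, (if ρ i then (1 : ℝ) else -1) * (e k (ω i).1 - e k (ω i).2) =
          ((m : ℝ)⁻¹ * ∑ i, (if ρ i then (1 : ℝ) else -1) * e k (ω i).1) -
          ((m : ℝ)⁻¹ * ∑ i, (if ρ i then (1 : ℝ) else -1) * e k (ω i).2) := by
        rw [← mul_sub, ← Finset.sum_sub_distrib]
        congr 1
        exact Finset.sum_congr rfl fun i _ => by ring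
      rw [hdec]
      refine (abs_sub _ _).trans ?_
      have h1 := le_ciSup (bddAbove_abs_range (fun k' => hUb (fun i => (ω i).1, ρ) k')) k
      have h2 := le_ciSup (bddAbove_abs_range (fun k' => hUb (fun i => (ω i).2, ρ) k')) k
      exact add_le_add h1 h2
    calc ∫ ω, Gfun e m ρ ω ∂P2
        ≤ ∫ ω, (Ufun e m (fun i => (ω i).1, ρ) + Ufun e m (fun i => (ω i).2, ρ)) ∂P2 :=
          integral_mono (hintG ρ) (hintU1.add hintU2) hsplit
      _ = (∫ ω, Ufun e m (fun i => (ω i).1, ρ) ∂P2) +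
            ∫ ω, Ufun e m (fun i => (ω i).2, ρ) ∂P2 := integral_add hintU1 hintU2
      _ = (∫ x, Ufun e m (x, ρ) ∂P) + ∫ x, Ufun e m (x, ρ) ∂P := by rw [hfst ρ, hsnd ρ]
      _ = 2 * ∫ x, Ufun e m (x, ρ) ∂P := (two_mul _).symm
  -- main chain
  calc ∫ x, (⨆ k, |(∫ y, e k y ∂μ) - (m : ℝ)⁻¹ * ∑ i, e k (x i)|) ∂P
      ≤ ∫ x, (∫ x', Wfun e m (x', x) ∂P) ∂P := by
        refine integral_mono ?_ hintW.integral_prod_right stepA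
        exact integrable_of_bdd hZmeas (fun x => abs_ciSup_abs_le (hZb x))
    _ = ∫ pr, Wfun e m pr ∂(P.prod P) := (integral_prod_symm _ hintW).symm
    _ = ∫ ω, Gfun e m (fun _ => true) ω ∂P2 := by
        rw [← hΦ.integral_comp' (Wfun e m)]
        refine integral_congr_ae (Filter.Eventually.of_forall fun ω => ?_)
        show Wfun e m (fun i => (ω i).1, fun i => (ω i).2) = _
        refine iSup_congr fun k => ?_
        congr 1
        congr 1
        exact Finset.sum_congr rfl fun i _ => by simp
    _ = ∫ _ρ : Fin m → Bool, (∫ ω, Gfun e m (fun _ => true) ω ∂P2) ∂Bm := by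
        rw [integral_const]; simp
    _ ≤ ∫ ρ : Fin m → Bool, 2 * (∫ x, Ufun e m (x, ρ) ∂P) ∂Bm := by
        refine integral_mono (integrable_const _) ?_ hρbound
        exact (hintU.integral_prod_right).const_mul 2
    _ = 2 * ∫ ρ : Fin m → Bool, (∫ x, Ufun e m (x, ρ) ∂P) ∂Bm := integral_const_mul 2 _
    _ = 2 * ∫ z, Ufun e m z ∂(P.prod Bm) := by rw [integral_prod_symm _ hintU]
    _ = 2 * ∫ ω : (Fin m → X) × (Fin m → Bool),
          (⨆ k, |(m : ℝ)⁻¹ * ∑ i : Fin m, (if ω.2 i then (1 : ℝ) else -1) * e k (ω.1 i)|)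
          ∂(P.prod Bm) := rfl

end S6
section Assembly
variable {X : Type*} [MeasurableSpace X]

lemma integral_empMeasure {m : ℕ} (x : Fin m → X) (f : X → ℝ) (hf : Measurable f)
    {b : ℝ} (hb : ∀ y, |f y| ≤ b) :
    ∫ z, f z ∂(empMeasure x) = (m : ℝ)⁻¹ * ∑ i, f (x i) := by
  rw [empMeasure, integral_smul_measure,
    integral_finset_sum_measure (fun i _ => integrable_of_bdd hf hb)]
  simp only [fun i : Fin m => integral_dirac' f (x i) hf.stronglyMeasurable]
  simp [ENNReal.toReal_inv]

lemma zdiff_bound {m : ℕ} (hm : 0 < m) (e : ℕ → X → ℝ) {b : ℝ} (hb : ∀ k x, |e k x| ≤ b)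
    (I : ℕ → ℝ) (hI : ∀ k, |I k| ≤ b) (x : Fin m → X) (i : Fin m) (v : X) :
    |(⨆ k, |I k - (m : ℝ)⁻¹ * ∑ j, e k (Function.update x i v j)|) -
      (⨆ k, |I k - (m : ℝ)⁻¹ * ∑ j, e k (x j)|)| ≤ (m : ℝ)⁻¹ * (2 * b) := by
  have hterm : ∀ k w, |I k - (m : ℝ)⁻¹ * ∑ j, e k ((w : Fin m → X) j)| ≤ b + b := by
    intro k w
    refine (abs_sub _ _).trans ?_
    have := avg_abs_le hm (g := fun j => e k (w j)) (fun j => hb k _)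
    have := hI k
    linarith
  refine abs_ciSup_sub (fun k => hterm k _) (fun k => hterm k _) (fun k => ?_)
  have hsum : ∑ j, e k (Function.update x i v j) - ∑ j, e k (x j) = e k v - e k (x i) := by
    have hfun : (fun j => e k (Function.update x i v j)) =
        Function.update (fun j => e k (x j)) i (e k v) := by
      funext j
      by_cases h : j = i
      · subst h; simp
      · simp [Function.update_of_ne h]
    have h2 : ∀ g : Fin m → ℝ, ∑ j, g j = g i + ∑ j ∈ Finset.univ.erase i, g j :=
      fun g => (Finset.add_sum_erase _ _ (Finset.mem_univ i)).symm
    rw [hfun, h2 (Function.update (fun j => e k (x j)) i (e k v)), h2 (fun j => e k (x j))]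
    have h3 : ∑ j ∈ Finset.univ.erase i, Function.update (fun j => e k (x j)) i (e k v) j =
        ∑ j ∈ Finset.univ.erase i, e k (x j) :=
      Finset.sum_congr rfl fun j hj => by
        simp [Function.update_of_ne (Finset.ne_of_mem_erase hj)]
    rw [h3, Function.update_self]
    ring
  have : (I k - (m : ℝ)⁻¹ * ∑ j, e k (Function.update x i v j)) -
      (I k - (m : ℝ)⁻¹ * ∑ j, e k (x j)) = (m : ℝ)⁻¹ * (e k (x i) - e k v) := by
    linear_combination (-(m : ℝ)⁻¹) * hsum
  rw [this, abs_mul, abs_inv, Nat.abs_cast]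
  refine mul_le_mul_of_nonneg_left ?_ (by positivity)
  refine (abs_sub _ _).trans ?_
  have := hb k (x i); have := hb k v; linarith

end Assembly

/-- Proposition 1: finite-sample deviation bound for the IPM. -/
theorem ipm_empirical_deviation
    {X : Type*} [MeasurableSpace X] (p q : Measure X)
    [IsProbabilityMeasure p] [IsProbabilityMeasure q]
    (F : Set (X → ℝ)) (hFcount : F.Countable)
    (hFmeas : ∀ f ∈ F, Measurable f)
    (ν : ℝ) (hν : ∀ f ∈ F, ∀ x, |f x| ≤ ν)
    (m n : ℕ) (hm : 0 < m) (hn : 0 < n)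
    (δ : ℝ) (hδ : 0 < δ) (hδ1 : δ < 1) :
    ENNReal.ofReal (1 - δ) ≤
      ((Measure.pi fun _ : Fin m => p).prod (Measure.pi fun _ : Fin n => q))
        {ω : (Fin m → X) × (Fin n → X) |
          |IPM F p q - IPM F (empMeasure ω.1) (empMeasure ω.2)| ≤
            2 * rademacher p m F + 2 * rademacher q n F +
              Real.sqrt (18 * ν ^ 2 * Real.log (4 / δ)) *
                (1 / Real.sqrt m + 1 / Real.sqrt n)} := by
  classical
  by_cases hFne : F.Nonempty
  case neg =>
    have hFe : F = ∅ := Set.not_nonempty_iff_eq_empty.mp hFne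
    have hS : {ω : (Fin m → X) × (Fin n → X) |
        |IPM F p q - IPM F (empMeasure ω.1) (empMeasure ω.2)| ≤
          2 * rademacher p m F + 2 * rademacher q n F +
            Real.sqrt (18 * ν ^ 2 * Real.log (4 / δ)) *
              (1 / Real.sqrt m + 1 / Real.sqrt n)} = Set.univ := by
      refine Set.eq_univ_iff_forall.mpr fun ω => ?_
      simp only [Set.mem_setOf_eq, hFe, IPM, rademacher, Set.image_empty, Real.sSup_empty,
        integral_zero, sub_zero, abs_zero, mul_zero, add_zero, zero_add]
      positivity
    rw [hS, measure_univ]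
    exact ENNReal.ofReal_le_one.mpr (by linarith)
  case pos =>
    obtain ⟨e, hF_eq⟩ := hFcount.exists_eq_range hFne
    subst hF_eq
    have he : ∀ k, Measurable (e k) := fun k => hFmeas _ (Set.mem_range_self k)
    have hbe : ∀ k x, |e k x| ≤ ν := fun k x => hν _ (Set.mem_range_self k) x
    obtain ⟨x0⟩ : Nonempty X := nonempty_of_prob p
    have hν0 : 0 ≤ ν := le_trans (abs_nonneg _) (hbe 0 x0)
    have hm' : (0:ℝ) < m := Nat.cast_pos.mpr hm
    have hn' : (0:ℝ) < n := Nat.cast_pos.mpr hn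
    -- rewriting into countable-sup form
    have hIPM1 : IPM (Set.range e) p q = ⨆ k, |(∫ x, e k x ∂p) - ∫ x, e k x ∂q| :=
      sSup_image_range _ e
    have hIPM2 : ∀ (x : Fin m → X) (y : Fin n → X),
        IPM (Set.range e) (empMeasure x) (empMeasure y) =
          ⨆ k, |(m:ℝ)⁻¹ * ∑ i, e k (x i) - (n:ℝ)⁻¹ * ∑ j, e k (y j)| := by
      intro x y
      rw [IPM, sSup_image_range]
      refine iSup_congr fun k => ?_
      rw [integral_empMeasure x (e k) (he k) (hbe k),
        integral_empMeasure y (e k) (he k) (hbe k)]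
    have hrad1 : rademacher p m (Set.range e) = ∫ z, Ufun e m z
        ∂((Measure.pi fun _ : Fin m => p).prod
          (Measure.pi fun _ : Fin m => (PMF.uniformOfFintype Bool).toMeasure)) := by
      rw [rademacher]
      exact integral_congr_ae (Filter.Eventually.of_forall fun ω => sSup_image_range _ e)
    have hrad2 : rademacher q n (Set.range e) = ∫ z, Ufun e n z
        ∂((Measure.pi fun _ : Fin n => q).prod
          (Measure.pi fun _ : Fin n => (PMF.uniformOfFintype Bool).toMeasure)) := by
      rw [rademacher]
      exact integral_congr_ae (Filter.Eventually.of_forall fun ω => sSup_image_range _ e)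
    -- integral bounds
    have hIpb : ∀ k, |∫ y, e k y ∂p| ≤ ν := fun k => (abs_integral_le' _).trans (by
      calc ∫ y, |e k y| ∂p ≤ ∫ _, ν ∂p :=
            integral_mono (integrable_of_bdd (he k) (hbe k)).abs (integrable_const _) (hbe k)
        _ = ν := by simp)
    have hIqb : ∀ k, |∫ y, e k y ∂q| ≤ ν := fun k => (abs_integral_le' _).trans (by
      calc ∫ y, |e k y| ∂q ≤ ∫ _, ν ∂q :=
            integral_mono (integrable_of_bdd (he k) (hbe k)).abs (integrable_const _) (hbe k)
        _ = ν := by simp)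
    have hempm : ∀ (x : Fin m → X) k, |(m:ℝ)⁻¹ * ∑ i, e k (x i)| ≤ ν := fun x k =>
      avg_abs_le hm (fun i => hbe k _)
    have hempn : ∀ (y : Fin n → X) k, |(n:ℝ)⁻¹ * ∑ j, e k (y j)| ≤ ν := fun y k =>
      avg_abs_le hn (fun j => hbe k _)
    -- the Z statistics
    have hZpb : ∀ (x : Fin m → X) k,
        |(∫ y, e k y ∂p) - (m:ℝ)⁻¹ * ∑ i, e k (x i)| ≤ ν + ν := fun x k =>
      (abs_sub _ _).trans (add_le_add (hIpb k) (hempm x k))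
    have hZqb : ∀ (y : Fin n → X) k,
        |(∫ y', e k y' ∂q) - (n:ℝ)⁻¹ * ∑ j, e k (y j)| ≤ ν + ν := fun y k =>
      (abs_sub _ _).trans (add_le_add (hIqb k) (hempn y k))
    have hZpmeas : Measurable fun x : Fin m → X =>
        ⨆ k, |(∫ y, e k y ∂p) - (m:ℝ)⁻¹ * ∑ i, e k (x i)| := by
      refine Measurable.iSup fun k => Measurable.abs ?_
      exact measurable_const.sub (measurable_const.mul
        (Finset.measurable_sum _ fun i _ => (he k).comp (measurable_pi_apply i)))
    have hZqmeas : Measurable fun y : Fin n → X =>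
        ⨆ k, |(∫ y', e k y' ∂q) - (n:ℝ)⁻¹ * ∑ j, e k (y j)| := by
      refine Measurable.iSup fun k => Measurable.abs ?_
      exact measurable_const.sub (measurable_const.mul
        (Finset.measurable_sum _ fun j _ => (he k).comp (measurable_pi_apply j)))
    -- deterministic decomposition
    have hdecomp : ∀ (x : Fin m → X) (y : Fin n → X),
        |IPM (Set.range e) p q - IPM (Set.range e) (empMeasure x) (empMeasure y)| ≤
          (⨆ k, |(∫ y', e k y' ∂p) - (m:ℝ)⁻¹ * ∑ i, e k (x i)|) +
          ⨆ k, |(∫ y', e k y' ∂q) - (n:ℝ)⁻¹ * ∑ j, e k (y j)| := by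
      intro x y
      rw [hIPM1, hIPM2 x y]
      have hZpx : ∀ k, |(∫ y', e k y' ∂p) - (m:ℝ)⁻¹ * ∑ i, e k (x i)| ≤
          ⨆ k', |(∫ y', e k' y' ∂p) - (m:ℝ)⁻¹ * ∑ i, e k' (x i)| := fun k =>
        le_ciSup (bddAbove_abs_range (fun k' => hZpb x k')) k
      have hZqy : ∀ k, |(∫ y', e k y' ∂q) - (n:ℝ)⁻¹ * ∑ j, e k (y j)| ≤
          ⨆ k', |(∫ y', e k' y' ∂q) - (n:ℝ)⁻¹ * ∑ j, e k' (y j)| := fun k =>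
        le_ciSup (bddAbove_abs_range (fun k' => hZqb y k')) k
      rw [abs_sub_le_iff]
      constructor
      · rw [sub_le_iff_le_add]
        refine ciSup_le fun k => ?_
        have hkey : (∫ x', e k x' ∂p) - ∫ x', e k x' ∂q =
            ((m:ℝ)⁻¹ * ∑ i, e k (x i) - (n:ℝ)⁻¹ * ∑ j, e k (y j)) +
            (((∫ y', e k y' ∂p) - (m:ℝ)⁻¹ * ∑ i, e k (x i)) -
             ((∫ y', e k y' ∂q) - (n:ℝ)⁻¹ * ∑ j, e k (y j))) := by ring
        calc |(∫ x', e k x' ∂p) - ∫ x', e k x' ∂q|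
            ≤ |(m:ℝ)⁻¹ * ∑ i, e k (x i) - (n:ℝ)⁻¹ * ∑ j, e k (y j)| +
              (|(∫ y', e k y' ∂p) - (m:ℝ)⁻¹ * ∑ i, e k (x i)| +
               |(∫ y', e k y' ∂q) - (n:ℝ)⁻¹ * ∑ j, e k (y j)|) := by
              rw [hkey]
              exact (abs_add_le _ _).trans (add_le_add le_rfl (abs_sub _ _))
          _ ≤ (⨆ k', |(m:ℝ)⁻¹ * ∑ i, e k' (x i) - (n:ℝ)⁻¹ * ∑ j, e k' (y j)|) +
              ((⨆ k', |(∫ y', e k' y' ∂p) - (m:ℝ)⁻¹ * ∑ i, e k' (x i)|) +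
               ⨆ k', |(∫ y', e k' y' ∂q) - (n:ℝ)⁻¹ * ∑ j, e k' (y j)|) := by
              have hcd : |(m:ℝ)⁻¹ * ∑ i, e k (x i) - (n:ℝ)⁻¹ * ∑ j, e k (y j)| ≤
                  ⨆ k', |(m:ℝ)⁻¹ * ∑ i, e k' (x i) - (n:ℝ)⁻¹ * ∑ j, e k' (y j)| :=
                le_ciSup (bddAbove_abs_range (fun k' =>
                  (abs_sub _ _).trans (add_le_add (hempm x k') (hempn y k')))) k
              exact add_le_add hcd (add_le_add (hZpx k) (hZqy k))
          _ = _ := by ring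
      · rw [sub_le_iff_le_add]
        refine ciSup_le fun k => ?_
        have hkey : (m:ℝ)⁻¹ * ∑ i, e k (x i) - (n:ℝ)⁻¹ * ∑ j, e k (y j) =
            ((∫ x', e k x' ∂p) - ∫ x', e k x' ∂q) -
            (((∫ y', e k y' ∂p) - (m:ℝ)⁻¹ * ∑ i, e k (x i)) -
             ((∫ y', e k y' ∂q) - (n:ℝ)⁻¹ * ∑ j, e k (y j))) := by ring
        calc |(m:ℝ)⁻¹ * ∑ i, e k (x i) - (n:ℝ)⁻¹ * ∑ j, e k (y j)|
            ≤ |(∫ x', e k x' ∂p) - ∫ x', e k x' ∂q| +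
              (|(∫ y', e k y' ∂p) - (m:ℝ)⁻¹ * ∑ i, e k (x i)| +
               |(∫ y', e k y' ∂q) - (n:ℝ)⁻¹ * ∑ j, e k (y j)|) := by
              rw [hkey]
              exact (abs_sub _ _).trans (add_le_add le_rfl (abs_sub _ _))
          _ ≤ (⨆ k', |(∫ x', e k' x' ∂p) - ∫ x', e k' x' ∂q|) +
              ((⨆ k', |(∫ y', e k' y' ∂p) - (m:ℝ)⁻¹ * ∑ i, e k' (x i)|) +
               ⨆ k', |(∫ y', e k' y' ∂q) - (n:ℝ)⁻¹ * ∑ j, e k' (y j)|) := by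
              have hab : |(∫ x', e k x' ∂p) - ∫ x', e k x' ∂q| ≤
                  ⨆ k', |(∫ x', e k' x' ∂p) - ∫ x', e k' x' ∂q| :=
                le_ciSup (bddAbove_abs_range (fun k' =>
                  (abs_sub _ _).trans (add_le_add (hIpb k') (hIqb k')))) k
              exact add_le_add hab (add_le_add (hZpx k) (hZqy k))
          _ = _ := by ring
    rcases eq_or_lt_of_le hν0 with hveq | hνpos
    · -- degenerate case ν = 0
      have he0 : ∀ k x, e k x = 0 := fun k x => by
        have h := hbe k x
        rw [← hveq] at h
        exact abs_nonpos_iff.mp h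
      have hS : {ω : (Fin m → X) × (Fin n → X) |
          |IPM (Set.range e) p q -
            IPM (Set.range e) (empMeasure ω.1) (empMeasure ω.2)| ≤
          2 * rademacher p m (Set.range e) + 2 * rademacher q n (Set.range e) +
            Real.sqrt (18 * ν ^ 2 * Real.log (4 / δ)) *
              (1 / Real.sqrt m + 1 / Real.sqrt n)} = Set.univ := by
        refine Set.eq_univ_iff_forall.mpr fun ω => ?_
        simp only [Set.mem_setOf_eq]
        have h1 : IPM (Set.range e) p q = 0 := by
          rw [hIPM1]; simp [he0]
        have h2 : IPM (Set.range e) (empMeasure ω.1) (empMeasure ω.2) = 0 := by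
          rw [hIPM2]; simp [he0]
        have h3 : rademacher p m (Set.range e) = 0 := by
          rw [hrad1]
          have : ∀ z, Ufun e m z = 0 := fun z => by simp [Ufun, he0]
          simp [this]
        have h4 : rademacher q n (Set.range e) = 0 := by
          rw [hrad2]
          have : ∀ z, Ufun e n z = 0 := fun z => by simp [Ufun, he0]
          simp [this]
        rw [h1, h2, h3, h4, ← hveq]
        norm_num
      rw [hS, measure_univ]
      exact ENNReal.ofReal_le_one.mpr (by linarith)
    · -- main case : 0 < ν
      have hLpos : 0 < Real.log (4 / δ) :=
        Real.log_pos ((one_lt_div hδ).mpr (by linarith))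
      have hCpos : 0 < 18 * ν ^ 2 * Real.log (4 / δ) :=
        mul_pos (mul_pos (by norm_num) (pow_pos hνpos 2)) hLpos
      set C : ℝ := 18 * ν ^ 2 * Real.log (4 / δ) with hCdef
      have hεm2 : (Real.sqrt C * (1 / Real.sqrt m)) ^ 2 = C / m := by
        rw [mul_pow, Real.sq_sqrt hCpos.le, one_div, inv_pow,
          Real.sq_sqrt (le_of_lt hm'), div_eq_mul_inv]
      have hεn2 : (Real.sqrt C * (1 / Real.sqrt n)) ^ 2 = C / n := by
        rw [mul_pow, Real.sq_sqrt hCpos.le, one_div, inv_pow,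
          Real.sq_sqrt (le_of_lt hn'), div_eq_mul_inv]
      have hεm : 0 < Real.sqrt C * (1 / Real.sqrt m) :=
        mul_pos (Real.sqrt_pos.mpr hCpos) (by positivity)
      have hεn : 0 < Real.sqrt C * (1 / Real.sqrt n) :=
        mul_pos (Real.sqrt_pos.mpr hCpos) (by positivity)
      have hc_m : 0 < (m:ℝ)⁻¹ * (2 * ν) := by positivity
      have hc_n : 0 < (n:ℝ)⁻¹ * (2 * ν) := by positivity
      -- McDiarmid for the p-side
      have hMcDp := mcdiarmid_tail p hm
        (fun x : Fin m → X => ⨆ k, |(∫ y, e k y ∂p) - (m:ℝ)⁻¹ * ∑ i, e k (x i)|)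
        hZpmeas (ν + ν) (fun x => abs_ciSup_abs_le (hZpb x)) hc_m
        (fun x i v => zdiff_bound hm e hbe (fun k => ∫ y, e k y ∂p) hIpb x i v) hεm
      have hMcDq := mcdiarmid_tail q hn
        (fun y : Fin n → X => ⨆ k, |(∫ y', e k y' ∂q) - (n:ℝ)⁻¹ * ∑ j, e k (y j)|)
        hZqmeas (ν + ν) (fun y => abs_ciSup_abs_le (hZqb y)) hc_n
        (fun y j v => zdiff_bound hn e hbe (fun k => ∫ y', e k y' ∂q) hIqb y j v) hεn
      -- tail values
      have htail : ∀ (N : ℕ), 0 < N → (0:ℝ) < N →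
          Real.exp (-((Real.sqrt C * (1 / Real.sqrt N)) ^ 2) / (2 * N * ((N:ℝ)⁻¹ * (2 * ν)) ^ 2))
            ≤ δ / 4 := by
        intro N hN hN'
        have hNne : (N:ℝ) ≠ 0 := ne_of_gt hN'
        have hεN2 : (Real.sqrt C * (1 / Real.sqrt N)) ^ 2 = C / N := by
          rw [mul_pow, Real.sq_sqrt hCpos.le, one_div, inv_pow,
            Real.sq_sqrt (le_of_lt hN'), div_eq_mul_inv]
        have hexp_eq : -((Real.sqrt C * (1 / Real.sqrt N)) ^ 2) /
            (2 * N * ((N:ℝ)⁻¹ * (2 * ν)) ^ 2) = -(9/4) * Real.log (4 / δ) := by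
          rw [hεN2, hCdef]
          field_simp
          ring
        rw [hexp_eq]
        calc Real.exp (-(9/4) * Real.log (4 / δ))
            ≤ Real.exp (-Real.log (4 / δ)) := Real.exp_le_exp.mpr (by nlinarith)
          _ = δ / 4 := by
              rw [Real.exp_neg, Real.exp_log (by positivity), inv_div]
      -- symmetrization
      have hEZp2 : (∫ x, (⨆ k, |(∫ y, e k y ∂p) - (m:ℝ)⁻¹ * ∑ i, e k (x i)|)
          ∂(Measure.pi fun _ : Fin m => p)) ≤ 2 * rademacher p m (Set.range e) := by
        rw [hrad1]
        exact symmetrization p hm e he hbe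
      have hEZq2 : (∫ y, (⨆ k, |(∫ y', e k y' ∂q) - (n:ℝ)⁻¹ * ∑ j, e k (y j)|)
          ∂(Measure.pi fun _ : Fin n => q)) ≤ 2 * rademacher q n (Set.range e) := by
        rw [hrad2]
        exact symmetrization q hn e he hbe
      -- bad events
      set EZp : ℝ := ∫ x, (⨆ k, |(∫ y, e k y ∂p) - (m:ℝ)⁻¹ * ∑ i, e k (x i)|)
          ∂(Measure.pi fun _ : Fin m => p) with hEZpdef
      set EZq : ℝ := ∫ y, (⨆ k, |(∫ y', e k y' ∂q) - (n:ℝ)⁻¹ * ∑ j, e k (y j)|)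
          ∂(Measure.pi fun _ : Fin n => q) with hEZqdef
      set PQ := (Measure.pi fun _ : Fin m => p).prod (Measure.pi fun _ : Fin n => q) with hPQ
      have hB1meas : MeasurableSet {ω : (Fin m → X) × (Fin n → X) |
          EZp + Real.sqrt C * (1 / Real.sqrt m) ≤
            ⨆ k, |(∫ y, e k y ∂p) - (m:ℝ)⁻¹ * ∑ i, e k (ω.1 i)|} :=
        measurableSet_le measurable_const (hZpmeas.comp measurable_fst)
      have hB2meas : MeasurableSet {ω : (Fin m → X) × (Fin n → X) |
          EZq + Real.sqrt C * (1 / Real.sqrt n) ≤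
            ⨆ k, |(∫ y', e k y' ∂q) - (n:ℝ)⁻¹ * ∑ j, e k (ω.2 j)|} :=
        measurableSet_le measurable_const (hZqmeas.comp measurable_snd)
      have hμB1 : PQ {ω : (Fin m → X) × (Fin n → X) |
          EZp + Real.sqrt C * (1 / Real.sqrt m) ≤
            ⨆ k, |(∫ y, e k y ∂p) - (m:ℝ)⁻¹ * ∑ i, e k (ω.1 i)|} ≤
          ENNReal.ofReal (δ / 4) := by
        have hprod : {ω : (Fin m → X) × (Fin n → X) |
            EZp + Real.sqrt C * (1 / Real.sqrt m) ≤
              ⨆ k, |(∫ y, e k y ∂p) - (m:ℝ)⁻¹ * ∑ i, e k (ω.1 i)|} =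
            {x : Fin m → X | EZp + Real.sqrt C * (1 / Real.sqrt m) ≤
              ⨆ k, |(∫ y, e k y ∂p) - (m:ℝ)⁻¹ * ∑ i, e k (x i)|} ×ˢ
            (Set.univ : Set (Fin n → X)) := by
          ext ω; simp [Set.mem_prod]
        rw [hPQ, hprod, Measure.prod_prod, measure_univ, mul_one]
        exact le_trans hMcDp (ENNReal.ofReal_le_ofReal (htail m hm hm'))
      have hμB2 : PQ {ω : (Fin m → X) × (Fin n → X) |
          EZq + Real.sqrt C * (1 / Real.sqrt n) ≤
            ⨆ k, |(∫ y', e k y' ∂q) - (n:ℝ)⁻¹ * ∑ j, e k (ω.2 j)|} ≤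
          ENNReal.ofReal (δ / 4) := by
        have hprod : {ω : (Fin m → X) × (Fin n → X) |
            EZq + Real.sqrt C * (1 / Real.sqrt n) ≤
              ⨆ k, |(∫ y', e k y' ∂q) - (n:ℝ)⁻¹ * ∑ j, e k (ω.2 j)|} =
            (Set.univ : Set (Fin m → X)) ×ˢ
            {y : Fin n → X | EZq + Real.sqrt C * (1 / Real.sqrt n) ≤
              ⨆ k, |(∫ y', e k y' ∂q) - (n:ℝ)⁻¹ * ∑ j, e k (y j)|} := by
          ext ω; simp [Set.mem_prod]
        rw [hPQ, hprod, Measure.prod_prod, measure_univ, one_mul]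
        exact le_trans hMcDq (ENNReal.ofReal_le_ofReal (htail n hn hn'))
      -- inclusion of the good event
      have hsub : ({ω : (Fin m → X) × (Fin n → X) |
            EZp + Real.sqrt C * (1 / Real.sqrt m) ≤
              ⨆ k, |(∫ y, e k y ∂p) - (m:ℝ)⁻¹ * ∑ i, e k (ω.1 i)|} ∪
          {ω : (Fin m → X) × (Fin n → X) |
            EZq + Real.sqrt C * (1 / Real.sqrt n) ≤
              ⨆ k, |(∫ y', e k y' ∂q) - (n:ℝ)⁻¹ * ∑ j, e k (ω.2 j)|})ᶜ ⊆
          {ω : (Fin m → X) × (Fin n → X) |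
            |IPM (Set.range e) p q -
              IPM (Set.range e) (empMeasure ω.1) (empMeasure ω.2)| ≤
            2 * rademacher p m (Set.range e) + 2 * rademacher q n (Set.range e) +
              Real.sqrt C * (1 / Real.sqrt m + 1 / Real.sqrt n)} := by
        intro ω hω
        simp only [Set.mem_compl_iff, Set.mem_union, not_or, Set.mem_setOf_eq, not_le] at hω
        obtain ⟨h1, h2⟩ := hω
        simp only [Set.mem_setOf_eq]
        calc |IPM (Set.range e) p q -
              IPM (Set.range e) (empMeasure ω.1) (empMeasure ω.2)|
            ≤ (⨆ k, |(∫ y', e k y' ∂p) - (m:ℝ)⁻¹ * ∑ i, e k (ω.1 i)|) +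
              ⨆ k, |(∫ y', e k y' ∂q) - (n:ℝ)⁻¹ * ∑ j, e k (ω.2 j)| := hdecomp ω.1 ω.2
          _ ≤ (EZp + Real.sqrt C * (1 / Real.sqrt m)) +
              (EZq + Real.sqrt C * (1 / Real.sqrt n)) := by
              exact add_le_add h1.le h2.le
          _ ≤ (2 * rademacher p m (Set.range e) + Real.sqrt C * (1 / Real.sqrt m)) +
              (2 * rademacher q n (Set.range e) + Real.sqrt C * (1 / Real.sqrt n)) := by
              have := hEZp2; have := hEZq2; gcongr <;> linarith
          _ = 2 * rademacher p m (Set.range e) + 2 * rademacher q n (Set.range e) +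
              Real.sqrt C * (1 / Real.sqrt m + 1 / Real.sqrt n) := by ring
      -- final computation
      have hBmeas := hB1meas.union hB2meas
      have hμB : PQ ({ω : (Fin m → X) × (Fin n → X) |
            EZp + Real.sqrt C * (1 / Real.sqrt m) ≤
              ⨆ k, |(∫ y, e k y ∂p) - (m:ℝ)⁻¹ * ∑ i, e k (ω.1 i)|} ∪
          {ω : (Fin m → X) × (Fin n → X) |
            EZq + Real.sqrt C * (1 / Real.sqrt n) ≤
              ⨆ k, |(∫ y', e k y' ∂q) - (n:ℝ)⁻¹ * ∑ j, e k (ω.2 j)|}) ≤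
          ENNReal.ofReal δ := by
        refine le_trans (measure_union_le _ _) ?_
        refine le_trans (add_le_add hμB1 hμB2) ?_
        rw [← ENNReal.ofReal_add (by positivity) (by positivity)]
        exact ENNReal.ofReal_le_ofReal (by linarith)
      calc ENNReal.ofReal (1 - δ) = 1 - ENNReal.ofReal δ := by
            rw [← ENNReal.ofReal_one, ← ENNReal.ofReal_sub _ hδ.le]
        _ ≤ 1 - PQ _ := tsub_le_tsub_left hμB 1
        _ = PQ _ᶜ := by
            rw [measure_compl hBmeas (measure_ne_top _ _), measure_univ]
        _ ≤ PQ _ := measure_mono hsub
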